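/- Suppose m₂ : ℕ → ℝ is completely multiplicative with values in {-1,0,1}, m₂(p) = 0 at a prime p, and ∑_{n=1}^∞ m₂(n)·n·f(2πn²/x) > 0 for all x > 0. Let m₁ be completely multiplicative agreeing with m₂ at all primes except p, with m₁(p) = 1. Then ∑_{n=1}^∞ m₁(n)·n·f(2πn²/x) > ∑_{n=1}^∞ m₂(n)·n·f(2πn²/x) for all x > 0. -/

import Mathlib

noncomputable def f (y : ℝ) : ℝ := (1 / y) * ∫ t in Set.Ioi y, Real.exp (-t) / t

open Real MeasureTheory Set

lemma f_integrable {y : ℝ} (hy : 0 < y) :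
    IntegrableOn (fun t => Real.exp (-t) / t) (Ioi y) := by
  have h : IntegrableOn (fun t : ℝ => Real.exp (-(1:ℝ) * t) * y⁻¹) (Ioi y) :=
    (exp_neg_integrableOn_Ioi y one_pos).mul_const _
  refine h.integrable.mono' ?_ ?_
  · exact ((Real.measurable_exp.comp measurable_neg).div measurable_id).aestronglyMeasurable
  · filter_upwards [ae_restrict_mem measurableSet_Ioi] with t ht
    have ht' : y < t := ht
    have h0 : 0 < t := hy.trans ht'
    rw [Real.norm_eq_abs, abs_div, abs_of_pos (exp_pos _), abs_of_pos h0]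
    rw [neg_one_mul]
    rw [div_eq_mul_inv]
    have : t⁻¹ ≤ y⁻¹ := by
      exact inv_anti₀ hy ht'.le
    nlinarith [exp_pos (-t), this]

lemma f_nonneg {y : ℝ} (hy : 0 ≤ y) : 0 ≤ f y := by
  rcases eq_or_lt_of_le hy with h | h
  · simp [f, ← h]
  · apply mul_nonneg (by positivity)
    apply setIntegral_nonneg measurableSet_Ioi
    intro t ht
    have : 0 < t := h.trans ht
    positivity

lemma f_le {y : ℝ} (hy : 0 < y) : f y ≤ Real.exp (-y) / y ^ 2 := by
  have hint : (∫ t in Ioi y, Real.exp (-t) / t) ≤ Real.exp (-y) / y := by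
    have h1 : (∫ t in Ioi y, Real.exp (-t) / t) ≤ ∫ t in Ioi y, Real.exp (-t) / y := by
      refine setIntegral_mono_on (f_integrable hy) ?_ measurableSet_Ioi ?_
      · have : IntegrableOn (fun t : ℝ => Real.exp (-(1:ℝ) * t) * y⁻¹) (Ioi y) :=
          (exp_neg_integrableOn_Ioi y one_pos).mul_const y⁻¹
        refine this.congr_fun (fun t _ => ?_) measurableSet_Ioi
        simp only [neg_one_mul, div_eq_mul_inv]
      · intro t ht
        have ht' : y < t := ht
        have h0 : 0 < t := hy.trans ht'
        exact div_le_div_of_nonneg_left (exp_pos _).le hy ht'.le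
    calc (∫ t in Ioi y, Real.exp (-t) / t) ≤ ∫ t in Ioi y, Real.exp (-t) / y := h1
      _ = (∫ t in Ioi y, Real.exp (-t)) / y := by rw [integral_div]
      _ = Real.exp (-y) / y := by rw [integral_exp_neg_Ioi]
  have : f y ≤ (1 / y) * (Real.exp (-y) / y) := by
    exact mul_le_mul_of_nonneg_left hint (by positivity)
  calc f y ≤ (1 / y) * (Real.exp (-y) / y) := this
    _ = Real.exp (-y) / y ^ 2 := by field_simp

lemma term_bound {x : ℝ} (hx : 0 < x) (n : ℕ) :
    (n : ℝ) * f (2 * π * (n : ℝ) ^ 2 / x) ≤ x ^ 2 * Real.exp (-(2 * π / x)) ^ n := by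
  rcases Nat.eq_zero_or_pos n with h | h
  · subst h; simp; positivity
  · have h1 : (1:ℝ) ≤ (n:ℝ) := by exact_mod_cast h
    have hpi := Real.pi_gt_three
    set u : ℝ := 2 * π * (n : ℝ) ^ 2 / x with hu_def
    have hu : 0 < u := by positivity
    have hfle := f_le hu
    have hexp : Real.exp (-(2 * π / x)) ^ n = Real.exp (-(2 * π * n / x)) := by
      rw [← Real.exp_nat_mul]; ring_nf
    have hxu : x * u = 2 * π * (n:ℝ) ^ 2 := by
      rw [hu_def]; field_simp
    have hnle : (n : ℝ) ≤ x ^ 2 * u ^ 2 := by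
      have hx2u2 : x ^ 2 * u ^ 2 = (2 * π * (n:ℝ) ^ 2) ^ 2 := by
        rw [← hxu]; ring
      rw [hx2u2]
      have a1 : (0:ℝ) ≤ (n:ℝ) - 1 := by linarith
      have key : (0:ℝ) ≤ (n:ℝ) * ((n:ℝ) - 1) * ((n:ℝ)^2 + (n:ℝ) + 1) :=
        mul_nonneg (mul_nonneg (by positivity) a1) (by positivity)
      have hn4 : (n:ℝ) ≤ (n:ℝ)^4 := by nlinarith [key]
      have hh : (0:ℝ) ≤ (4*π^2 - 1) * (n:ℝ)^4 :=
        mul_nonneg (by nlinarith) (by positivity)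
      nlinarith [hn4, hh]
    have hexple : Real.exp (-u) ≤ Real.exp (-(2 * π * n / x)) := by
      apply Real.exp_le_exp.mpr
      rw [neg_le_neg_iff, hu_def]
      gcongr
      nlinarith
    calc (n : ℝ) * f u ≤ (n : ℝ) * (Real.exp (-u) / u ^ 2) :=
          mul_le_mul_of_nonneg_left hfle (by positivity)
      _ = (n : ℝ) * Real.exp (-u) / u ^ 2 := by ring
      _ ≤ x ^ 2 * Real.exp (-(2 * π / x)) ^ n := by
          rw [div_le_iff₀ (by positivity), hexp]
          calc (n:ℝ) * Real.exp (-u) ≤ (x ^ 2 * u ^ 2) * Real.exp (-(2 * π * n / x)) := by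
                apply mul_le_mul hnle hexple (exp_pos _).le (by positivity)
            _ = x ^ 2 * Real.exp (-(2 * π * n / x)) * u ^ 2 := by ring

lemma summable_terms {x : ℝ} (hx : 0 < x) (m : ℕ → ℝ) (hm : ∀ n, |m n| ≤ 1) :
    Summable (fun n : ℕ => m n * n * f (2 * π * (n : ℝ) ^ 2 / x)) := by
  have hr0 : (0:ℝ) ≤ Real.exp (-(2 * π / x)) := (exp_pos _).le
  have hr1 : Real.exp (-(2 * π / x)) < 1 := by
    apply Real.exp_lt_one_iff.mpr  -- name guess
    have : 0 < 2 * π / x := by positivity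
    linarith
  have hgeo : Summable (fun n : ℕ => x ^ 2 * Real.exp (-(2 * π / x)) ^ n) :=
    (summable_geometric_of_lt_one hr0 hr1).mul_left _
  rw [← summable_abs_iff]
  apply hgeo.of_nonneg_of_le (fun n => abs_nonneg _)
  intro n
  have hfn : 0 ≤ (n:ℝ) * f (2 * π * (n : ℝ) ^ 2 / x) :=
    mul_nonneg (Nat.cast_nonneg n) (f_nonneg (by positivity))
  calc |m n * n * f (2 * π * (n : ℝ) ^ 2 / x)|
      = |m n| * |(n:ℝ) * f (2 * π * (n : ℝ) ^ 2 / x)| := by rw [mul_assoc, abs_mul]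
    _ ≤ 1 * ((n:ℝ) * f (2 * π * (n : ℝ) ^ 2 / x)) := by
        rw [abs_of_nonneg hfn]; exact mul_le_mul_of_nonneg_right (hm n) hfn
    _ ≤ x ^ 2 * Real.exp (-(2 * π / x)) ^ n := by rw [one_mul]; exact term_bound hx n

lemma tsum_abs_bound {x : ℝ} (hx : 0 < x) (hx1 : x ≤ 1) (m : ℕ → ℝ) (hm : ∀ n, |m n| ≤ 1) :
    |∑' n : ℕ, m n * n * f (2 * π * (n : ℝ) ^ 2 / x)| ≤ 2 * x ^ 2 := by
  set r : ℝ := Real.exp (-(2 * π / x)) with hr_def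
  have hr0 : (0:ℝ) ≤ r := (exp_pos _).le
  have hpi := Real.pi_gt_three
  have hrhalf : r ≤ 1 / 2 := by
    have h1 : (1:ℝ) ≤ 2 * π / x := by
      rw [le_div_iff₀ hx]; nlinarith
    have : r ≤ Real.exp (-1) := by
      apply Real.exp_le_exp.mpr; linarith
    have he : Real.exp (-1) ≤ 1 / 2 := by
      rw [Real.exp_neg]
      rw [inv_le_comm₀ (exp_pos _) (by norm_num)]
      have := Real.add_one_le_exp (1:ℝ)
      linarith
    linarith
  have hr1 : r < 1 := by linarith
  have habs : Summable (fun n : ℕ => |m n * n * f (2 * π * (n : ℝ) ^ 2 / x)|) := by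
    rw [summable_abs_iff]; exact summable_terms hx m hm
  have hgeo : Summable (fun n : ℕ => x ^ 2 * r ^ n) :=
    (summable_geometric_of_lt_one hr0 hr1).mul_left _
  have hle : ∀ n : ℕ, |m n * n * f (2 * π * (n : ℝ) ^ 2 / x)| ≤ x ^ 2 * r ^ n := by
    intro n
    have hfn : 0 ≤ (n:ℝ) * f (2 * π * (n : ℝ) ^ 2 / x) :=
      mul_nonneg (Nat.cast_nonneg n) (f_nonneg (by positivity))
    calc |m n * n * f (2 * π * (n : ℝ) ^ 2 / x)|
        = |m n| * |(n:ℝ) * f (2 * π * (n : ℝ) ^ 2 / x)| := by rw [mul_assoc, abs_mul]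
      _ ≤ 1 * ((n:ℝ) * f (2 * π * (n : ℝ) ^ 2 / x)) := by
          rw [abs_of_nonneg hfn]; exact mul_le_mul_of_nonneg_right (hm n) hfn
      _ ≤ x ^ 2 * r ^ n := by rw [one_mul]; exact term_bound hx n
  calc |∑' n : ℕ, m n * n * f (2 * π * (n : ℝ) ^ 2 / x)|
      ≤ ∑' n : ℕ, |m n * n * f (2 * π * (n : ℝ) ^ 2 / x)| := by
        have hnorm : Summable (fun n : ℕ => ‖m n * n * f (2 * π * (n : ℝ) ^ 2 / x)‖) := by
          simpa only [Real.norm_eq_abs] using habs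
        simpa only [Real.norm_eq_abs] using norm_tsum_le_tsum_norm hnorm
    _ ≤ ∑' n : ℕ, x ^ 2 * r ^ n := Summable.tsum_le_tsum hle habs hgeo
    _ = x ^ 2 * (1 - r)⁻¹ := by rw [tsum_mul_left, tsum_geometric_of_lt_one hr0 hr1]
    _ ≤ 2 * x ^ 2 := by
        have h12 : (1:ℝ) / 2 ≤ 1 - r := by linarith
        have : (1 - r)⁻¹ ≤ 2 := by
          rw [inv_le_comm₀ (by linarith) (by norm_num)]; linarith
        nlinarith [sq_nonneg x]

open Real in
theorem raise_prime_from_zero (m₁ m₂ : ℕ → ℝ) (p : ℕ) (hp : p.Prime)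
    (h₁one : m₁ 1 = 1) (h₁mul : ∀ a b : ℕ, m₁ (a * b) = m₁ a * m₁ b)
    (h₂one : m₂ 1 = 1) (h₂mul : ∀ a b : ℕ, m₂ (a * b) = m₂ a * m₂ b)
    (h₁val : ∀ n, m₁ n = -1 ∨ m₁ n = 0 ∨ m₁ n = 1)
    (h₂val : ∀ n, m₂ n = -1 ∨ m₂ n = 0 ∨ m₂ n = 1)
    (hagree : ∀ q : ℕ, q.Prime → q ≠ p → m₁ q = m₂ q)
    (h₂p : m₂ p = 0) (h₁p : m₁ p = 1)
    (hpos : ∀ x : ℝ, 0 < x → 0 < ∑' n : ℕ, m₂ n * (n : ℝ) * f (2 * π * (n : ℝ) ^ 2 / x)) :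
    ∀ x : ℝ, 0 < x →
      (∑' n : ℕ, m₂ n * (n : ℝ) * f (2 * π * (n : ℝ) ^ 2 / x)) <
        ∑' n : ℕ, m₁ n * (n : ℝ) * f (2 * π * (n : ℝ) ^ 2 / x) := by
  have hm₁ : ∀ n, |m₁ n| ≤ 1 := by
    intro n; rcases h₁val n with h | h | h <;> rw [h] <;> norm_num
  have hm₂ : ∀ n, |m₂ n| ≤ 1 := by
    intro n; rcases h₂val n with h | h | h <;> rw [h] <;> norm_num
  have hppos : (0:ℝ) < (p:ℝ) := by exact_mod_cast hp.pos
  have hp1 : (1:ℝ) < (p:ℝ) := by exact_mod_cast hp.one_lt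
  set S₁ : ℝ → ℝ := fun y => ∑' n : ℕ, m₁ n * (n : ℝ) * f (2 * π * (n : ℝ) ^ 2 / y)
    with hS₁def
  set S₂ : ℝ → ℝ := fun y => ∑' n : ℕ, m₂ n * (n : ℝ) * f (2 * π * (n : ℝ) ^ 2 / y)
    with hS₂def
  have hpos' : ∀ y : ℝ, 0 < y → 0 < S₂ y := hpos
  -- agreement away from p
  have hagree' : ∀ n : ℕ, ¬ p ∣ n → m₁ n = m₂ n := by
    intro n
    induction n using Nat.strong_induction_on with
    | _ n ih =>
      intro hnd
      rcases eq_or_ne n 1 with rfl | hn1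
      · rw [h₁one, h₂one]
      rcases eq_or_ne n 0 with rfl | hn0
      · exact absurd (dvd_zero p) hnd
      obtain ⟨q, hq, hqd⟩ := Nat.exists_prime_and_dvd hn1
      obtain ⟨k, rfl⟩ := hqd
      have hqp : q ≠ p := by rintro rfl; exact hnd (dvd_mul_right q k)
      have hk0 : k ≠ 0 := by rintro rfl; simp at hn0
      have hklt : k < q * k := by
        have h2 := hq.two_le
        calc k = 1 * k := (one_mul k).symm
          _ < q * k := by
              exact Nat.mul_lt_mul_of_lt_of_le (by omega) le_rfl (Nat.pos_of_ne_zero hk0)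
      have hpk : ¬ p ∣ k := fun h => hnd (h.mul_left q)
      rw [h₁mul, h₂mul, hagree q hq hqp, ih k hklt hpk]
  -- the recursion
  have hrec : ∀ y : ℝ, 0 < y → S₁ y = S₂ y + (p:ℝ) * S₁ (y / (p:ℝ) ^ 2) := by
    intro y hy
    have hs₁ := summable_terms hy m₁ hm₁
    have hs₂ := summable_terms hy m₂ hm₂
    have hdiff : (∑' n : ℕ, (m₁ n * (n:ℝ) * f (2 * π * (n : ℝ) ^ 2 / y)
        - m₂ n * (n:ℝ) * f (2 * π * (n : ℝ) ^ 2 / y))) = S₁ y - S₂ y :=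
      Summable.tsum_sub hs₁ hs₂
    have hinj : Function.Injective (fun k : ℕ => p * k) := fun a b h => by
      exact Nat.eq_of_mul_eq_mul_left hp.pos h
    have hsupp : Function.support (fun n : ℕ => m₁ n * (n:ℝ) * f (2 * π * (n : ℝ) ^ 2 / y)
        - m₂ n * (n:ℝ) * f (2 * π * (n : ℝ) ^ 2 / y)) ⊆ Set.range (fun k : ℕ => p * k) := by
      intro n hn
      by_contra hnr
      have hnd : ¬ p ∣ n := by
        rintro ⟨k, rfl⟩; exact hnr ⟨k, rfl⟩
      apply hn
      simp [hagree' n hnd]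
    have key := hinj.tsum_eq (f := fun n : ℕ => m₁ n * (n:ℝ) * f (2 * π * (n : ℝ) ^ 2 / y)
        - m₂ n * (n:ℝ) * f (2 * π * (n : ℝ) ^ 2 / y)) hsupp
    have hterm : ∀ k : ℕ, m₁ (p * k) * ((p * k : ℕ):ℝ) * f (2 * π * ((p * k : ℕ) : ℝ) ^ 2 / y)
        - m₂ (p * k) * ((p * k : ℕ):ℝ) * f (2 * π * ((p * k : ℕ) : ℝ) ^ 2 / y)
        = (p:ℝ) * (m₁ k * (k:ℝ) * f (2 * π * (k : ℝ) ^ 2 / (y / (p:ℝ) ^ 2))) := by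
      intro k
      have harg : 2 * π * ((p * k : ℕ) : ℝ) ^ 2 / y = 2 * π * (k:ℝ) ^ 2 / (y / (p:ℝ) ^ 2) := by
        push_cast
        rw [div_div_eq_mul_div]
        ring
      rw [h₁mul, h₂mul, h₁p, h₂p, harg]
      push_cast
      ring
    have hleft : (∑' k : ℕ, (m₁ (p * k) * ((p * k : ℕ):ℝ) * f (2 * π * ((p * k : ℕ) : ℝ) ^ 2 / y)
        - m₂ (p * k) * ((p * k : ℕ):ℝ) * f (2 * π * ((p * k : ℕ) : ℝ) ^ 2 / y)))
        = (p:ℝ) * S₁ (y / (p:ℝ) ^ 2) := by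
      rw [tsum_congr hterm, tsum_mul_left]
    rw [hdiff] at key
    have key' : (p:ℝ) * S₁ (y / (p:ℝ) ^ 2) = S₁ y - S₂ y := by
      rw [← hleft, ← key]
    linarith
  -- positivity of S₁ at every scale
  have hS₁pos : ∀ y : ℝ, 0 < y → 0 < S₁ y := by
    intro y hy
    have claim : ∀ K : ℕ, S₂ y + (p:ℝ) ^ (K + 1) * S₁ (y / (p:ℝ) ^ (2 * (K + 1))) ≤ S₁ y := by
      intro K
      induction K with
      | zero =>
        have h := hrec y hy
        norm_num
        linarith [h]
      | succ K ih =>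
        set z : ℝ := y / (p:ℝ) ^ (2 * (K + 1)) with hz
        have hzpos : 0 < z := by positivity
        have hrecz := hrec z hzpos
        have hz2 : z / (p:ℝ) ^ 2 = y / (p:ℝ) ^ (2 * (K + 1 + 1)) := by
          rw [hz, div_div, ← pow_add]
          congr 1
        rw [hz2] at hrecz
        have hposz := hpos' z hzpos
        have hppow : (0:ℝ) < (p:ℝ) ^ (K + 1) := by positivity
        have e1 : (p:ℝ) ^ (K + 1 + 1) = (p:ℝ) ^ (K + 1) * (p:ℝ) := pow_succ _ _
        have e2 : (p:ℝ) ^ (K + 1) * ((p:ℝ) * S₁ (y / (p:ℝ) ^ (2 * (K + 1 + 1))))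
            = (p:ℝ) ^ (K + 1) * S₁ z - (p:ℝ) ^ (K + 1) * S₂ z := by
          rw [show (p:ℝ) * S₁ (y / (p:ℝ) ^ (2 * (K + 1 + 1))) = S₁ z - S₂ z from by
            linarith [hrecz]]
          ring
        have e3 : (p:ℝ) ^ (K + 1 + 1) * S₁ (y / (p:ℝ) ^ (2 * (K + 1 + 1)))
            = (p:ℝ) ^ (K + 1) * S₁ z - (p:ℝ) ^ (K + 1) * S₂ z := by
          rw [e1, mul_assoc, e2]
        have hps : 0 < (p:ℝ) ^ (K + 1) * S₂ z := mul_pos hppow hposz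
        linarith [ih, e3, hps]
    -- choose K large
    obtain ⟨N₁, hN₁⟩ := pow_unbounded_of_one_lt y hp1
    obtain ⟨N₂, hN₂⟩ := pow_unbounded_of_one_lt (2 * y ^ 2 / S₂ y) hp1
    set M : ℕ := N₁ + N₂ + 1 with hM
    set z : ℝ := y / (p:ℝ) ^ (2 * M) with hz
    have hzpos : 0 < z := by positivity
    have hplarge : y < (p:ℝ) ^ (2 * M) := by
      calc y < (p:ℝ) ^ N₁ := hN₁
        _ ≤ (p:ℝ) ^ (2 * M) := pow_le_pow_right₀ hp1.le (by omega)
    have hz1 : z ≤ 1 := by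
      rw [hz, div_le_one (by positivity)]
      linarith
    have habs := tsum_abs_bound hzpos hz1 m₁ hm₁
    have hS₁z : |S₁ z| ≤ 2 * z ^ 2 := habs
    have hSy2 : 0 < S₂ y := hpos' y hy
    have hkey : (p:ℝ) ^ M * (2 * z ^ 2) < S₂ y := by
      have hzz : z ^ 2 = y ^ 2 / ((p:ℝ) ^ (2 * M)) ^ 2 := by rw [hz, div_pow]
      have h2y : 2 * y ^ 2 < (p:ℝ) ^ N₂ * S₂ y := by
        rw [div_lt_iff₀ hSy2] at hN₂; linarith
      have hmono : (p:ℝ) ^ N₂ ≤ (p:ℝ) ^ (3 * M) := pow_le_pow_right₀ hp1.le (by omega)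
      have hpow : ((p:ℝ) ^ (2 * M)) ^ 2 = (p:ℝ) ^ M * (p:ℝ) ^ (3 * M) := by
        rw [← pow_mul, ← pow_add]
        congr 1
        omega
      have hMpos : (0:ℝ) < (p:ℝ) ^ M := by positivity
      have h3Mpos : (0:ℝ) < (p:ℝ) ^ (3 * M) := by positivity
      rw [hzz, hpow]
      rw [show (p:ℝ) ^ M * (2 * (y ^ 2 / ((p:ℝ) ^ M * (p:ℝ) ^ (3 * M))))
          = 2 * y ^ 2 / (p:ℝ) ^ (3 * M) from by field_simp]
      rw [div_lt_iff₀ h3Mpos]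
      calc 2 * y ^ 2 < (p:ℝ) ^ N₂ * S₂ y := h2y
        _ ≤ (p:ℝ) ^ (3 * M) * S₂ y := by
            exact mul_le_mul_of_nonneg_right hmono hSy2.le
        _ = S₂ y * (p:ℝ) ^ (3 * M) := mul_comm _ _
    have hMM : M = (N₁ + N₂) + 1 := rfl
    have hclaimM := claim (N₁ + N₂)
    rw [← hMM] at hclaimM
    have h1 : -(2 * z ^ 2) ≤ S₁ z := by
      rcases abs_le.mp hS₁z with ⟨h, _⟩; linarith
    have hMpos : (0:ℝ) < (p:ℝ) ^ M := by positivity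
    have h2 : -((p:ℝ) ^ M * (2 * z ^ 2)) ≤ (p:ℝ) ^ M * S₁ z := by
      have := mul_le_mul_of_nonneg_left h1 hMpos.le
      linarith [this]
    linarith [hclaimM, h2, hkey]
  -- conclude
  intro x hx
  have h := hrec x hx
  have hpp := hS₁pos (x / (p:ℝ) ^ 2) (by positivity)
  have : 0 < (p:ℝ) * S₁ (x / (p:ℝ) ^ 2) := mul_pos hppos hpp
  show S₂ x < S₁ x
  linarith
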